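/- Consider the linear system x²y' = M y + (x,x)ᵀ where M is the matrix with rows (0,1),(−1,0) plus μ·x·Id for μ>0. The homogeneous system x²y' = (M₀ + μx·Id)y with M₀ = [[0,1],[−1,0]] admits the explicit solution y(x) = x^μ (sin(1/x), cos(1/x))ᵀ for x>0, which tends to 0 as x→0⁺ but does not admit an asymptotic expansion in a power series at 0⁺ (indeed x^{−μ}y₁(x) = sin(1/x) has no limit as x→0⁺). -/

import Mathlib

open Set Filter Real

private noncomputable def seqA (k : ℕ) : ℝ := (2 * Real.pi * (k + 1))⁻¹
private noncomputable def seqB (k : ℕ) : ℝ := (Real.pi / 2 + 2 * Real.pi * (k + 1))⁻¹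

private lemma seqA_pos (k : ℕ) : 0 < seqA k := by
  have := Real.pi_pos; unfold seqA; positivity

private lemma seqB_pos (k : ℕ) : 0 < seqB k := by
  have := Real.pi_pos; unfold seqB; positivity

private lemma seqA_tendsto : Tendsto seqA atTop (nhdsWithin 0 (Ioi 0)) := by
  rw [tendsto_nhdsWithin_iff]
  constructor
  · apply Filter.Tendsto.inv_tendsto_atTop
    apply Filter.Tendsto.const_mul_atTop (by positivity : (0:ℝ) < 2 * Real.pi)
    exact tendsto_atTop_add_const_right _ 1 tendsto_natCast_atTop_atTop
  · exact Filter.Eventually.of_forall fun k => seqA_pos k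

private lemma seqB_tendsto : Tendsto seqB atTop (nhdsWithin 0 (Ioi 0)) := by
  rw [tendsto_nhdsWithin_iff]
  constructor
  · apply Filter.Tendsto.inv_tendsto_atTop
    apply tendsto_atTop_add_const_left
    apply Filter.Tendsto.const_mul_atTop (by positivity : (0:ℝ) < 2 * Real.pi)
    exact tendsto_atTop_add_const_right _ 1 tendsto_natCast_atTop_atTop
  · exact Filter.Eventually.of_forall fun k => seqB_pos k

private lemma sin_seqA (k : ℕ) : Real.sin (seqA k)⁻¹ = 0 := by
  rw [seqA, inv_inv]
  have : 2 * Real.pi * (k + 1) = (2 * (k + 1) : ℕ) * Real.pi := by push_cast; ring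
  rw [this, Real.sin_nat_mul_pi]

private lemma sin_seqB (k : ℕ) : Real.sin (seqB k)⁻¹ = 1 := by
  rw [seqB, inv_inv]
  have : Real.pi / 2 + 2 * Real.pi * (k + 1) = Real.pi / 2 + ((k + 1) : ℕ) * (2 * Real.pi) := by
    push_cast; ring
  rw [this, Real.sin_add_nat_mul_two_pi, Real.sin_pi_div_two]

private lemma rpow_tendsto {e : ℝ} (he : 0 < e) :
    Tendsto (fun x : ℝ => x ^ e) (nhdsWithin 0 (Ioi 0)) (nhds 0) := by
  have h : ContinuousAt (fun x : ℝ => x ^ e) 0 :=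
    Real.continuousAt_rpow_const 0 e (Or.inr he.le)
  have := h.continuousWithinAt (s := Ioi 0)
  simpa [ContinuousWithinAt, Real.zero_rpow he.ne'] using this

theorem stmt_18 (μ : ℝ) (hμ : 0 < μ)
    (y : ℝ → Fin 2 → ℝ)
    (hy : ∀ x : ℝ, 0 < x →
      y x = fun i => x ^ μ * (if i = 0 then Real.sin (1/x) else Real.cos (1/x))) :
    (∀ x : ℝ, 0 < x → ∃ d : Fin 2 → ℝ, HasDerivAt y d x ∧
      x ^ 2 • d = ((Matrix.of ![![(0:ℝ), -1], ![1, 0]]) + (μ * x) • (1 : Matrix (Fin 2) (Fin 2) ℝ)).mulVec (y x)) ∧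
    Filter.Tendsto y (nhdsWithin 0 (Ioi 0)) (nhds 0) ∧
    ¬ (∃ h : ℕ → Fin 2 → ℝ, ∀ N : ℕ, ∃ C δ : ℝ, 0 < C ∧ 0 < δ ∧
        ∀ x ∈ Ioo (0:ℝ) δ,
          ‖y x - ∑ n ∈ Finset.range (N+1), x ^ n • h n‖ ≤ C * x ^ (N+1)) ∧
    ¬ (∃ L : ℝ, Filter.Tendsto (fun x : ℝ => Real.sin (1/x))
        (nhdsWithin 0 (Ioi 0)) (nhds L)) := by
  -- values at the two sequences
  have hyA : ∀ k, y (seqA k) 0 = 0 := by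
    intro k
    rw [hy _ (seqA_pos k)]
    simp [sin_seqA k]
  have hyB : ∀ k, y (seqB k) 0 = (seqB k) ^ μ := by
    intro k
    rw [hy _ (seqB_pos k)]
    simp [sin_seqB k]
  refine ⟨?_, ?_, ?_, ?_⟩
  · -- derivative
    intro x hx
    have hx' : x ≠ 0 := hx.ne'
    refine ⟨fun i => if i = 0 then μ * x ^ (μ - 1) * Real.sin x⁻¹ + x ^ μ * (Real.cos x⁻¹ * -(x ^ 2)⁻¹)
      else μ * x ^ (μ - 1) * Real.cos x⁻¹ + x ^ μ * (-Real.sin x⁻¹ * -(x ^ 2)⁻¹), ?_, ?_⟩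
    · have heq : y =ᶠ[nhds x] fun t => fun i =>
          t ^ μ * (if i = 0 then Real.sin (1/t) else Real.cos (1/t)) := by
        filter_upwards [eventually_gt_nhds hx] with t ht using hy t ht
      refine (hasDerivAt_pi.2 fun i => ?_).congr_of_eventuallyEq heq
      have hinv : HasDerivAt (fun t : ℝ => t⁻¹) (-(x ^ 2)⁻¹) x := hasDerivAt_inv hx'
      have hpow : HasDerivAt (fun t : ℝ => t ^ μ) (μ * x ^ (μ - 1)) x :=
        Real.hasDerivAt_rpow_const (Or.inl hx')
      fin_cases i
      · have hsin : HasDerivAt (fun t : ℝ => Real.sin t⁻¹) (Real.cos x⁻¹ * -(x ^ 2)⁻¹) x :=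
          (Real.hasDerivAt_sin x⁻¹).comp x hinv
        have := hpow.mul hsin
        simpa [one_div, mul_comm] using this.congr_of_eventuallyEq
          (Filter.Eventually.of_forall fun t => by simp [one_div])
      · have hcos : HasDerivAt (fun t : ℝ => Real.cos t⁻¹) (-Real.sin x⁻¹ * -(x ^ 2)⁻¹) x :=
          (Real.hasDerivAt_cos x⁻¹).comp x hinv
        have := hpow.mul hcos
        simpa [one_div, mul_comm] using this.congr_of_eventuallyEq
          (Filter.Eventually.of_forall fun t => by simp [one_div])
    · rw [hy x hx]
      have hxmul : x ^ 2 * x ^ (μ - 1) = x * x ^ μ := by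
        rw [Real.rpow_sub hx, Real.rpow_one]
        field_simp
      have hxmul2 : x ^ 2 * (x ^ 2 : ℝ)⁻¹ = 1 := by
        field_simp
      funext i
      fin_cases i
      · simp only [Fin.isValue, Pi.smul_apply, smul_eq_mul, Matrix.add_mulVec,
          Matrix.smul_mulVec, Matrix.one_mulVec, Matrix.mulVec, dotProduct,
          Fin.sum_univ_two, Matrix.of_apply, Matrix.cons_val', Matrix.cons_val_zero,
          Matrix.cons_val_one, Matrix.head_cons, Matrix.empty_val', Matrix.cons_val_fin_one,
          Matrix.head_fin_const, Pi.add_apply, one_div, if_pos, if_neg]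
        norm_num
        linear_combination (μ * Real.sin x⁻¹) * hxmul - (x ^ μ * Real.cos x⁻¹) * hxmul2
      · simp only [Fin.isValue, Pi.smul_apply, smul_eq_mul, Matrix.add_mulVec,
          Matrix.smul_mulVec, Matrix.one_mulVec, Matrix.mulVec, dotProduct,
          Fin.sum_univ_two, Matrix.of_apply, Matrix.cons_val', Matrix.cons_val_zero,
          Matrix.cons_val_one, Matrix.head_cons, Matrix.empty_val', Matrix.cons_val_fin_one,
          Matrix.head_fin_const, Pi.add_apply, one_div]
        norm_num
        linear_combination (μ * Real.cos x⁻¹) * hxmul + (x ^ μ * Real.sin x⁻¹) * hxmul2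
  · -- tendsto 0
    rw [tendsto_pi_nhds]
    intro i
    have h0 : Tendsto (fun x : ℝ => |y x i|) (nhdsWithin 0 (Ioi 0)) (nhds 0) := by
      apply squeeze_zero' (Filter.Eventually.of_forall fun t => abs_nonneg _)
        (g := fun x : ℝ => x ^ μ) _ (rpow_tendsto hμ)
      filter_upwards [self_mem_nhdsWithin] with t ht
      rw [hy t ht]
      have h1 : (0:ℝ) ≤ t ^ μ := Real.rpow_nonneg (le_of_lt ht) μ
      rw [abs_mul, abs_of_nonneg h1]
      calc t ^ μ * |if i = 0 then Real.sin (1/t) else Real.cos (1/t)|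
          ≤ t ^ μ * 1 := by
            apply mul_le_mul_of_nonneg_left _ h1
            split <;> [exact Real.abs_sin_le_one _; exact Real.abs_cos_le_one _]
        _ = t ^ μ := mul_one _
    exact (tendsto_zero_iff_abs_tendsto_zero _).mpr h0
  · -- no asymptotic expansion
    rintro ⟨h, hexp⟩
    -- all coefficients (component 0) vanish
    have hzero : ∀ n, h n 0 = 0 := by
      intro n
      induction n using Nat.strong_induction_on with
      | _ n ih =>
        obtain ⟨C, δ, hC, hδ, hbound⟩ := hexp n
        have key : ∀ᶠ k in atTop, |h n 0| ≤ C * seqA k := by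
          have hmem : ∀ᶠ k in atTop, seqA k ∈ Ioo (0:ℝ) δ := by
            filter_upwards [seqA_tendsto (Ioo_mem_nhdsGT_of_mem ⟨le_refl 0, hδ⟩)] with k hk
            exact hk
          filter_upwards [hmem] with k hk
          have hb := hbound (seqA k) hk
          have hsum : (∑ m ∈ Finset.range (n+1), (seqA k) ^ m • h m) 0
              = (seqA k) ^ n * h n 0 := by
            rw [Finset.sum_apply, Finset.sum_range_succ, Finset.sum_eq_zero]
            · simp
            · intro m hm
              simp [ih m (Finset.mem_range.1 hm)]
          have hcomp : |(y (seqA k) - ∑ m ∈ Finset.range (n+1), (seqA k) ^ m • h m) 0|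
              ≤ C * (seqA k) ^ (n+1) := by
            refine le_trans ?_ hb
            rw [← Real.norm_eq_abs]
            exact norm_le_pi_norm _ (0 : Fin 2)
          rw [Pi.sub_apply, hyA k, hsum, zero_sub, abs_neg, abs_mul,
            abs_of_nonneg (pow_nonneg (seqA_pos k).le n)] at hcomp
          have hp : (0:ℝ) < (seqA k) ^ n := pow_pos (seqA_pos k) n
          rw [pow_succ, ← mul_assoc] at hcomp
          calc |h n 0| = ((seqA k) ^ n * |h n 0|) / (seqA k) ^ n := by field_simp
            _ ≤ (C * (seqA k) ^ n * seqA k) / (seqA k) ^ n := by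
                gcongr
            _ = C * seqA k := by field_simp
        have hlim : Tendsto (fun k => C * seqA k) atTop (nhds 0) := by
          have := (seqA_tendsto.mono_right nhdsWithin_le_nhds).const_mul C
          simpa using this
        have hle := ge_of_tendsto hlim key
        have : |h n 0| = 0 := le_antisymm hle (abs_nonneg _)
        exact abs_eq_zero.1 this
    -- final contradiction with N = ⌈μ⌉₊
    set N := ⌈μ⌉₊ with hN
    obtain ⟨C, δ, hC, hδ, hbound⟩ := hexp N
    have hNμ : μ < (N:ℝ) + 1 := lt_of_le_of_lt (Nat.le_ceil μ) (by rw [hN]; linarith)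
    have key : ∀ᶠ k in atTop, (1:ℝ) ≤ C * (seqB k) ^ ((N:ℝ) + 1 - μ) := by
      have hmem : ∀ᶠ k in atTop, seqB k ∈ Ioo (0:ℝ) δ := by
        filter_upwards [seqB_tendsto (Ioo_mem_nhdsGT_of_mem ⟨le_refl 0, hδ⟩)] with k hk
        exact hk
      filter_upwards [hmem] with k hk
      have hb := hbound (seqB k) hk
      have hbp := seqB_pos k
      have hsum : (∑ m ∈ Finset.range (N+1), (seqB k) ^ m • h m) 0 = 0 := by
        rw [Finset.sum_apply, Finset.sum_eq_zero]
        intro m _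
        simp [hzero m]
      have hcomp : |(y (seqB k) - ∑ m ∈ Finset.range (N+1), (seqB k) ^ m • h m) 0|
          ≤ C * (seqB k) ^ (N+1) := by
        refine le_trans ?_ hb
        rw [← Real.norm_eq_abs]
        exact norm_le_pi_norm _ (0 : Fin 2)
      rw [Pi.sub_apply, hyB k, hsum, sub_zero,
        abs_of_nonneg (Real.rpow_nonneg hbp.le μ)] at hcomp
      have hrw : ((seqB k) : ℝ) ^ (N+1) = (seqB k) ^ ((N:ℝ) + 1) := by
        rw [← Real.rpow_natCast (seqB k) (N+1)]
        push_cast; ring_nf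
      rw [hrw] at hcomp
      have hμpow : (0:ℝ) < (seqB k) ^ μ := Real.rpow_pos_of_pos hbp μ
      have : (seqB k) ^ ((N:ℝ) + 1) / (seqB k) ^ μ = (seqB k) ^ ((N:ℝ) + 1 - μ) :=
        (Real.rpow_sub hbp _ _).symm
      calc (1:ℝ) = (seqB k) ^ μ / (seqB k) ^ μ := by field_simp
        _ ≤ (C * (seqB k) ^ ((N:ℝ) + 1)) / (seqB k) ^ μ := by
            gcongr
        _ = C * ((seqB k) ^ ((N:ℝ) + 1) / (seqB k) ^ μ) := by ring
        _ = C * (seqB k) ^ ((N:ℝ) + 1 - μ) := by rw [this]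
    have hlim : Tendsto (fun k => C * (seqB k) ^ ((N:ℝ) + 1 - μ)) atTop (nhds 0) := by
      have := ((rpow_tendsto (by linarith : (0:ℝ) < (N:ℝ) + 1 - μ)).comp seqB_tendsto).const_mul C
      simpa using this
    have := ge_of_tendsto hlim key
    linarith
  · -- sin(1/x) has no limit
    rintro ⟨L, hL⟩
    have h0 : Tendsto (fun k => Real.sin (1 / seqA k)) atTop (nhds L) := hL.comp seqA_tendsto
    have h1 : Tendsto (fun k => Real.sin (1 / seqB k)) atTop (nhds L) := hL.comp seqB_tendsto
    have e0 : Tendsto (fun _ : ℕ => (0:ℝ)) atTop (nhds L) := by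
      simpa [one_div, sin_seqA] using h0
    have e1 : Tendsto (fun _ : ℕ => (1:ℝ)) atTop (nhds L) := by
      simpa [one_div, sin_seqB] using h1
    have hL0 := tendsto_nhds_unique e0 tendsto_const_nhds
    have hL1 := tendsto_nhds_unique e1 tendsto_const_nhds
    rw [hL0] at hL1
    norm_num at hL1
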